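/- arXiv:1606.03524 — 2 statements merged into one kernel-verified Lean document; each statement's English description precedes it below -/
import Mathlib

section
/- Let g : (0,1] → [0,∞) satisfy sup_{0<x≤1} x g(x) < ∞ and g(x) ≥ ε on [1−ε,1] for some ε > 0. Define u(β) = ∫₀¹ x e^{βx} g(x) dx for β > 0. Then u is differentiable with u′(β) = ∫₀¹ x² e^{βx} g(x) dx > 0, hence strictly increasing, and its inverse function β(u) (defined for u large) satisfies: e^{β(u)}/u → ∞ as u → ∞, while for every ε′ > 0, e^{β(u)}/u^{1+ε′} → 0 as u → ∞. -/
open MeasureTheory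

/-- `g` is piecewise `C^k` on `[a,b]`: there is a finite partition
`a = pts 0 < pts 1 < ⋯ < pts L = b` such that on each open subinterval `g` agrees with
a function that is `C^k` on the corresponding closed subinterval (equivalently, `g` is
`C^k` on each open piece and `g` together with its first `k` derivatives has finite
one-sided limits at all the partition points). -/
def PiecewiseCOn (k : ℕ) (g : ℝ → ℝ) (a b : ℝ) : Prop :=
  ∃ (L : ℕ) (pts : ℕ → ℝ), 0 < L ∧ pts 0 = a ∧ pts L = b ∧
    (∀ j < L, pts j < pts (j + 1)) ∧
    (∀ j < L, ∃ G : ℝ → ℝ, ContDiffOn ℝ k G (Set.Icc (pts j) (pts (j + 1))) ∧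
      Set.EqOn g G (Set.Ioo (pts j) (pts (j + 1))))

/-- The cumulant generating function `C(θ) = ∫₀¹ (e^{θx} − 1) g(x) dx`. -/
noncomputable def cgf (g : ℝ → ℝ) (θ : ℝ) : ℝ :=
  ∫ x in (0:ℝ)..1, (Real.exp (θ * x) - 1) * g x

/-- `C′(β) = ∫₀¹ x e^{βx} g(x) dx`, the mean of the `β`-tilt. -/
noncomputable def cgfDeriv (g : ℝ → ℝ) (β : ℝ) : ℝ :=
  ∫ x in (0:ℝ)..1, x * Real.exp (β * x) * g x

/-- `C″(β) = ∫₀¹ x² e^{βx} g(x) dx`, the variance `σ_β²` of the `β`-tilt. -/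
noncomputable def cgfDeriv2 (g : ℝ → ℝ) (β : ℝ) : ℝ :=
  ∫ x in (0:ℝ)..1, x ^ 2 * Real.exp (β * x) * g x


open Real Set Filter

section stmt8helpers
variable {g : ℝ → ℝ} {M ε : ℝ}

lemma stmt8_intOn (hg_meas : Measurable g)
    (hg_nonneg : ∀ x ∈ Set.Ioc (0:ℝ) 1, 0 ≤ g x)
    (hM : ∀ x ∈ Set.Ioc (0:ℝ) 1, x * g x ≤ M)
    (n : ℕ) (hn : 1 ≤ n) (β : ℝ) :
    IntegrableOn (fun x => x ^ n * Real.exp (β * x) * g x) (Set.Ioc 0 1) := by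
  have hmeas : Measurable fun x => x ^ n * Real.exp (β * x) * g x := by fun_prop
  refine Integrable.mono' (g := fun _ => M * Real.exp |β|)
    (integrable_const _) hmeas.aestronglyMeasurable ?_
  filter_upwards [ae_restrict_mem measurableSet_Ioc] with x hx
  have hx0 : 0 < x := hx.1
  have hx1 : x ≤ 1 := hx.2
  have hgx : 0 ≤ g x := hg_nonneg x hx
  have hxn : x ^ n ≤ x := by
    calc x ^ n ≤ x ^ 1 := pow_le_pow_of_le_one hx0.le hx1 hn
    _ = x := pow_one x
  have hexp : Real.exp (β * x) ≤ Real.exp |β| := by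
    apply Real.exp_le_exp.2
    calc β * x ≤ |β| * x := by
          apply mul_le_mul_of_nonneg_right (le_abs_self β) hx0.le
    _ ≤ |β| * 1 := by apply mul_le_mul_of_nonneg_left hx1 (abs_nonneg β)
    _ = |β| := mul_one _
  have h1 : x ^ n * Real.exp (β * x) * g x = Real.exp (β * x) * (x ^ n * g x) := by ring
  have h2 : 0 ≤ x ^ n * Real.exp (β * x) * g x := by positivity
  rw [Real.norm_eq_abs, abs_of_nonneg h2, h1]
  have hxng : x ^ n * g x ≤ M := le_trans (mul_le_mul_of_nonneg_right hxn hgx) (hM x hx)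
  calc Real.exp (β * x) * (x ^ n * g x) ≤ Real.exp |β| * M := by
        apply mul_le_mul hexp hxng (by positivity) (Real.exp_pos _).le
  _ = M * Real.exp |β| := mul_comm _ _

lemma stmt8_eq1 : cgfDeriv g = fun β => ∫ x in Set.Ioc (0:ℝ) 1, x * Real.exp (β * x) * g x :=
  funext fun β => intervalIntegral.integral_of_le zero_le_one

lemma stmt8_eq2 (β : ℝ) :
    cgfDeriv2 g β = ∫ x in Set.Ioc (0:ℝ) 1, x ^ 2 * Real.exp (β * x) * g x :=
  intervalIntegral.integral_of_le zero_le_one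

lemma stmt8_hasDeriv (hg_meas : Measurable g)
    (hg_nonneg : ∀ x ∈ Set.Ioc (0:ℝ) 1, 0 ≤ g x)
    (hM : ∀ x ∈ Set.Ioc (0:ℝ) 1, x * g x ≤ M) (β₀ : ℝ) :
    HasDerivAt (cgfDeriv g) (cgfDeriv2 g β₀) β₀ := by
  have key := hasDerivAt_integral_of_dominated_loc_of_deriv_le
    (F := fun β x => x * Real.exp (β * x) * g x)
    (F' := fun β x => x ^ 2 * Real.exp (β * x) * g x)
    (μ := volume.restrict (Set.Ioc (0:ℝ) 1))
    (bound := fun _ => M * Real.exp (|β₀| + 1)) (x₀ := β₀) (Metric.ball_mem_nhds β₀ one_pos)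
    (Filter.Eventually.of_forall fun β =>
      (by fun_prop : Measurable fun x => x * Real.exp (β * x) * g x).aestronglyMeasurable)
    (by simpa [IntegrableOn] using stmt8_intOn hg_meas hg_nonneg hM 1 le_rfl β₀)
    ((by fun_prop : Measurable fun x => x ^ 2 * Real.exp (β₀ * x) * g x).aestronglyMeasurable)
    ?_ (integrable_const _) ?_
  · rw [stmt8_eq1, stmt8_eq2]
    exact key.2
  · filter_upwards [ae_restrict_mem measurableSet_Ioc] with x hx β hβ
    have hx0 : 0 < x := hx.1
    have hx1 : x ≤ 1 := hx.2
    have hgx : 0 ≤ g x := hg_nonneg x hx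
    have hβb : |β| ≤ |β₀| + 1 := by
      have := Metric.mem_ball.1 hβ
      rw [Real.dist_eq] at this
      calc |β| = |β₀ + (β - β₀)| := by ring_nf
      _ ≤ |β₀| + |β - β₀| := abs_add_le _ _
      _ ≤ |β₀| + 1 := by linarith
    have hexp : Real.exp (β * x) ≤ Real.exp (|β₀| + 1) := by
      apply Real.exp_le_exp.2
      calc β * x ≤ |β| * x := mul_le_mul_of_nonneg_right (le_abs_self β) hx0.le
      _ ≤ |β| * 1 := mul_le_mul_of_nonneg_left hx1 (abs_nonneg β)
      _ ≤ |β₀| + 1 := by rw [mul_one]; exact hβb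
    have h2 : 0 ≤ x ^ 2 * Real.exp (β * x) * g x := by positivity
    rw [Real.norm_eq_abs, abs_of_nonneg h2]
    have hxn : x ^ 2 ≤ x := by nlinarith
    have hxng : x ^ 2 * g x ≤ M := le_trans (mul_le_mul_of_nonneg_right hxn hgx) (hM x hx)
    calc x ^ 2 * Real.exp (β * x) * g x = Real.exp (β * x) * (x ^ 2 * g x) := by ring
    _ ≤ Real.exp (|β₀| + 1) * M := mul_le_mul hexp hxng (by positivity) (Real.exp_pos _).le
    _ = M * Real.exp (|β₀| + 1) := mul_comm _ _
  · refine Filter.Eventually.of_forall fun x β _ => ?_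
    have h : HasDerivAt (fun β => x * Real.exp (β * x) * g x)
        (x * (Real.exp (β * x) * (1 * x)) * g x) β :=
      ((((hasDerivAt_id β).mul_const x).exp).const_mul x).mul_const (g x)
    refine h.congr_deriv ?_
    beta_reduce
    ring
lemma stmt8_pos2 (hg_meas : Measurable g)
    (hg_nonneg : ∀ x ∈ Set.Ioc (0:ℝ) 1, 0 ≤ g x)
    (hM : ∀ x ∈ Set.Ioc (0:ℝ) 1, x * g x ≤ M)
    (hε : 0 < ε) (hg_low : ∀ x ∈ Set.Icc (1 - ε) 1, ε ≤ g x) (β : ℝ) :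
    0 < cgfDeriv2 g β := by
  set δ : ℝ := min ε 2⁻¹ with hδdef
  have hδ0 : 0 < δ := lt_min hε (by norm_num)
  have hδε : δ ≤ ε := min_le_left _ _
  have hδh : δ ≤ 2⁻¹ := min_le_right _ _
  have h1δ : (2:ℝ)⁻¹ ≤ 1 - δ := by linarith
  set f : ℝ → ℝ := fun x => x ^ 2 * Real.exp (β * x) * g x with hf
  have hint : IntervalIntegrable f volume 0 1 := by
    rw [intervalIntegrable_iff_integrableOn_Ioc_of_le zero_le_one]
    exact stmt8_intOn hg_meas hg_nonneg hM 2 one_le_two β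
  have hsub1 : IntervalIntegrable f volume 0 (1 - δ) := by
    apply hint.mono_set
    rw [Set.uIcc_of_le (by linarith), Set.uIcc_of_le zero_le_one]
    exact Set.Icc_subset_Icc le_rfl (by linarith)
  have hsub2 : IntervalIntegrable f volume (1 - δ) 1 := by
    apply hint.mono_set
    rw [Set.uIcc_of_le (by linarith), Set.uIcc_of_le zero_le_one]
    exact Set.Icc_subset_Icc (by linarith) le_rfl
  have hsplit : cgfDeriv2 g β =
      (∫ x in (0:ℝ)..(1-δ), f x) + ∫ x in (1-δ)..1, f x :=
    (intervalIntegral.integral_add_adjacent_intervals hsub1 hsub2).symm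
  have hpart1 : 0 ≤ ∫ x in (0:ℝ)..(1-δ), f x := by
    apply intervalIntegral.integral_nonneg (by linarith)
    intro u hu
    rcases eq_or_lt_of_le hu.1 with h | h
    · simp [hf, ← h]
    · have : 0 ≤ g u := hg_nonneg u ⟨h, by linarith [hu.2]⟩
      positivity
  have hpart2 : 0 < ∫ x in (1-δ)..1, f x := by
    apply intervalIntegral.intervalIntegral_pos_of_pos_on hsub2 _ (by linarith)
    intro x hx
    have hx1 : 1 - δ < x := hx.1
    have hx2 : x < 1 := hx.2
    have hgx : ε ≤ g x := hg_low x ⟨by linarith, hx2.le⟩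
    have hx0 : 0 < x := by linarith
    have : 0 < g x := lt_of_lt_of_le hε hgx
    positivity
  linarith

lemma stmt8_ub1 (hg_meas : Measurable g)
    (hg_nonneg : ∀ x ∈ Set.Ioc (0:ℝ) 1, 0 ≤ g x)
    (hM : ∀ x ∈ Set.Ioc (0:ℝ) 1, x * g x ≤ M) (β : ℝ) :
    cgfDeriv g β ≤ M * Real.exp (max β 0) := by
  have h := intervalIntegral.integral_of_le (f := fun x => x * Real.exp (β * x) * g x)
    (μ := volume) (zero_le_one (α := ℝ))
  rw [cgfDeriv, h]
  calc (∫ x in Set.Ioc (0:ℝ) 1, x * Real.exp (β * x) * g x)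
      ≤ ∫ _x in Set.Ioc (0:ℝ) 1, M * Real.exp (max β 0) := by
        apply setIntegral_mono_on
          (by simpa using stmt8_intOn hg_meas hg_nonneg hM 1 le_rfl β)
          (integrableOn_const measure_Ioc_lt_top.ne)
          measurableSet_Ioc
        intro x hx
        have hx0 : 0 < x := hx.1
        have hx1 : x ≤ 1 := hx.2
        have hgx : 0 ≤ g x := hg_nonneg x hx
        have hexp : Real.exp (β * x) ≤ Real.exp (max β 0) := by
          apply Real.exp_le_exp.2
          rcases le_or_gt 0 β with hβ | hβ
          · calc β * x ≤ β * 1 := mul_le_mul_of_nonneg_left hx1 hβ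
            _ ≤ max β 0 := by simp
          · have : β * x < 0 := mul_neg_of_neg_of_pos hβ hx0
            calc β * x ≤ 0 := this.le
            _ ≤ max β 0 := le_max_right _ _
        calc x * Real.exp (β * x) * g x = Real.exp (β * x) * (x * g x) := by ring
        _ ≤ Real.exp (max β 0) * M :=
            mul_le_mul hexp (hM x hx) (by positivity) (Real.exp_pos _).le
        _ = M * Real.exp (max β 0) := mul_comm _ _
  _ = M * Real.exp (max β 0) := by simp

lemma stmt8_ub2 (hg_meas : Measurable g)
    (hg_nonneg : ∀ x ∈ Set.Ioc (0:ℝ) 1, 0 ≤ g x)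
    (hM : ∀ x ∈ Set.Ioc (0:ℝ) 1, x * g x ≤ M) {β : ℝ} (hβ : 0 < β) (hM0 : 0 < M) :
    cgfDeriv g β ≤ M * Real.exp β / β := by
  have hc : Continuous fun x : ℝ => M * Real.exp (β * x) := by fun_prop
  have hFTC : (∫ x in (0:ℝ)..1, M * Real.exp (β * x))
      = M * Real.exp (β * 1) / β - M * Real.exp (β * 0) / β := by
    apply intervalIntegral.integral_eq_sub_of_hasDerivAt
      (f := fun y => M * Real.exp (β * y) / β)
    · intro x _
      have h : HasDerivAt (fun y => M * Real.exp (β * y) / β)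
          (M * (Real.exp (β * x) * (β * 1)) / β) x :=
        (((hasDerivAt_id x).const_mul β).exp.const_mul M).div_const β
      refine h.congr_deriv ?_
      rw [mul_one, mul_div_assoc, mul_div_cancel_right₀ _ hβ.ne']
    · exact hc.intervalIntegrable 0 1
  have hmono : cgfDeriv g β ≤ ∫ x in (0:ℝ)..1, M * Real.exp (β * x) := by
    rw [cgfDeriv, intervalIntegral.integral_of_le zero_le_one,
      intervalIntegral.integral_of_le (zero_le_one (α := ℝ))]
    apply setIntegral_mono_on
      (by simpa using stmt8_intOn hg_meas hg_nonneg hM 1 le_rfl β)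
      hc.integrableOn_Ioc
      measurableSet_Ioc
    intro x hx
    calc x * Real.exp (β * x) * g x = (x * g x) * Real.exp (β * x) := by ring
    _ ≤ M * Real.exp (β * x) :=
        mul_le_mul_of_nonneg_right (hM x hx) (Real.exp_pos _).le
  calc cgfDeriv g β ≤ M * Real.exp (β * 1) / β - M * Real.exp (β * 0) / β := by
        rw [← hFTC]; exact hmono
  _ ≤ M * Real.exp β / β := by
      rw [mul_one, mul_zero, Real.exp_zero, mul_one]
      have : 0 < M / β := by positivity
      rw [sub_le_iff_le_add]
      linarith
lemma stmt8_lb (hg_meas : Measurable g)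
    (hg_nonneg : ∀ x ∈ Set.Ioc (0:ℝ) 1, 0 ≤ g x)
    (hM : ∀ x ∈ Set.Ioc (0:ℝ) 1, x * g x ≤ M)
    (hg_low : ∀ x ∈ Set.Icc (1 - ε) 1, ε ≤ g x)
    {δ β : ℝ} (hδ0 : 0 < δ) (hδε : δ ≤ ε) (hδh : δ ≤ 2⁻¹) (hβ : 0 ≤ β) :
    δ * δ * (1 - δ) * Real.exp ((1 - δ) * β) ≤ cgfDeriv g β := by
  have hintOn : IntegrableOn (fun x => x * Real.exp (β * x) * g x) (Set.Ioc 0 1) := by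
    simpa using stmt8_intOn hg_meas hg_nonneg hM 1 le_rfl β
  have hsub : Set.Ioc (1 - δ) 1 ⊆ Set.Ioc (0:ℝ) 1 :=
    Set.Ioc_subset_Ioc (by linarith) le_rfl
  have step1 : (∫ x in Set.Ioc (1 - δ) 1, x * Real.exp (β * x) * g x)
      ≤ ∫ x in Set.Ioc (0:ℝ) 1, x * Real.exp (β * x) * g x := by
    apply setIntegral_mono_set hintOn
    · filter_upwards [ae_restrict_mem measurableSet_Ioc] with x hx
      have h0 : 0 < x := hx.1
      have hg : 0 ≤ g x := hg_nonneg x hx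
      positivity
    · exact HasSubset.Subset.eventuallyLE hsub
  have step2 : (∫ _x in Set.Ioc (1 - δ) 1, (1 - δ) * Real.exp ((1 - δ) * β) * δ)
      ≤ ∫ x in Set.Ioc (1 - δ) 1, x * Real.exp (β * x) * g x := by
    apply setIntegral_mono_on (integrableOn_const measure_Ioc_lt_top.ne)
      (hintOn.mono_set hsub) measurableSet_Ioc
    intro x hx
    have hx1 : 1 - δ < x := hx.1
    have hx2 : x ≤ 1 := hx.2
    have hgx : δ ≤ g x := le_trans hδε (hg_low x ⟨by linarith, hx2⟩)
    have hexp : Real.exp ((1 - δ) * β) ≤ Real.exp (β * x) := by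
      apply Real.exp_le_exp.2
      calc (1 - δ) * β = β * (1 - δ) := mul_comm _ _
      _ ≤ β * x := mul_le_mul_of_nonneg_left hx1.le hβ
    have hx0 : (0:ℝ) < x := by linarith
    have h1 : (1 - δ) * Real.exp ((1 - δ) * β) ≤ x * Real.exp (β * x) :=
      mul_le_mul hx1.le hexp (Real.exp_pos _).le (by linarith)
    exact mul_le_mul h1 hgx hδ0.le (by positivity)
  have hconst : (∫ _x in Set.Ioc (1 - δ) 1, (1 - δ) * Real.exp ((1 - δ) * β) * δ)
      = δ * ((1 - δ) * Real.exp ((1 - δ) * β) * δ) := by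
    rw [setIntegral_const, Real.volume_real_Ioc, show (1:ℝ) - (1 - δ) = δ by ring,
      max_eq_left hδ0.le, smul_eq_mul]
  rw [cgfDeriv, intervalIntegral.integral_of_le zero_le_one]
  calc δ * δ * (1 - δ) * Real.exp ((1 - δ) * β)
      = δ * ((1 - δ) * Real.exp ((1 - δ) * β) * δ) := by ring
  _ = ∫ _x in Set.Ioc (1 - δ) 1, (1 - δ) * Real.exp ((1 - δ) * β) * δ := hconst.symm
  _ ≤ ∫ x in Set.Ioc (1 - δ) 1, x * Real.exp (β * x) * g x := step2
  _ ≤ _ := step1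
end stmt8helpers

/-- **Lemma (growth of the mean of the tilt and of its inverse function).**
Let `g : (0,1] → [0,∞)` satisfy `sup x g(x) < ∞` and `g ≥ ε` on `[1−ε,1]`, and let
`u(β) = ∫₀¹ x e^{βx} g(x) dx`. Then `u′(β) = ∫₀¹ x² e^{βx} g(x) dx > 0` for `β > 0`,
so `u` is strictly increasing on `(0,∞)`; and any inverse function `β(·)` of `u`
(i.e. any `b` with `u(b(v)) = v` for all large `v`) satisfies `e^{b(v)}/v → ∞` while
`e^{b(v)}/v^{1+ε′} → 0` for every `ε′ > 0`, as `v → ∞`. -/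
theorem stmt8
    (g : ℝ → ℝ) (hg_meas : Measurable g)
    (hg_nonneg : ∀ x ∈ Set.Ioc (0:ℝ) 1, 0 ≤ g x)
    (M : ℝ) (hM : ∀ x ∈ Set.Ioc (0:ℝ) 1, x * g x ≤ M)
    (ε : ℝ) (hε : 0 < ε) (hg_low : ∀ x ∈ Set.Icc (1 - ε) 1, ε ≤ g x) :
    (∀ β : ℝ, 0 < β →
      HasDerivAt (cgfDeriv g) (cgfDeriv2 g β) β ∧ 0 < cgfDeriv2 g β) ∧
    StrictMonoOn (cgfDeriv g) (Set.Ioi 0) ∧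
    (∀ b : ℝ → ℝ, (∀ᶠ v in Filter.atTop, cgfDeriv g (b v) = v) →
      Filter.Tendsto (fun v => Real.exp (b v) / v) Filter.atTop Filter.atTop ∧
      ∀ ε' : ℝ, 0 < ε' →
        Filter.Tendsto (fun v => Real.exp (b v) / v ^ (1 + ε'))
          Filter.atTop (nhds 0)) := by
  have hM0 : 0 < M := by
    have h1 := hg_low 1 ⟨by linarith, le_rfl⟩
    have h2 := hM 1 ⟨one_pos, le_rfl⟩
    simp only [one_mul] at h2
    linarith
  have hD : ∀ β : ℝ, HasDerivAt (cgfDeriv g) (cgfDeriv2 g β) β :=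
    stmt8_hasDeriv hg_meas hg_nonneg hM
  have hpos : ∀ β : ℝ, 0 < cgfDeriv2 g β :=
    stmt8_pos2 hg_meas hg_nonneg hM hε hg_low
  refine ⟨fun β _ => ⟨hD β, hpos β⟩, ?_, ?_⟩
  · apply strictMonoOn_of_deriv_pos (convex_Ioi 0)
    · exact fun x _ => (hD x).continuousAt.continuousWithinAt
    · intro x _
      rw [(hD x).deriv]
      exact hpos x
  · intro b hb
    have hbA : ∀ᶠ v in atTop, Real.log v - Real.log M ≤ b v := by
      filter_upwards [hb, eventually_gt_atTop M, eventually_gt_atTop 0] with v hv hvM hv0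
      have hub := stmt8_ub1 hg_meas hg_nonneg hM (b v)
      rw [hv] at hub
      have hlog : Real.log v - Real.log M ≤ max (b v) 0 := by
        have h1 : v / M ≤ Real.exp (max (b v) 0) := by
          rw [div_le_iff₀ hM0]
          linarith [mul_comm M (Real.exp (max (b v) 0))]
        have h2 := Real.log_le_log (by positivity) h1
        rwa [Real.log_div (ne_of_gt hv0) (ne_of_gt hM0), Real.log_exp] at h2
      have hpos' : 0 < Real.log v - Real.log M := by
        have := Real.log_lt_log hM0 hvM
        linarith
      rcases le_or_gt (b v) 0 with h | h
      · rw [max_eq_right h] at hlog; linarith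
      · rwa [max_eq_left h.le] at hlog
    have hbtop : Tendsto b atTop atTop := by
      apply tendsto_atTop_mono' atTop hbA
      have := tendsto_atTop_add_const_right atTop (-Real.log M) Real.tendsto_log_atTop
      simpa [sub_eq_add_neg] using this
    constructor
    · have key : ∀ᶠ v in atTop, b v / M ≤ Real.exp (b v) / v := by
        filter_upwards [hb, hbtop.eventually (eventually_ge_atTop 1),
          eventually_gt_atTop 0] with v hv hbv1 hv0
        have hbv0 : 0 < b v := lt_of_lt_of_le one_pos hbv1
        have hub := stmt8_ub2 hg_meas hg_nonneg hM hbv0 hM0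
        rw [hv] at hub
        rw [div_le_div_iff₀ hM0 hv0]
        have h3 : v * b v ≤ M * Real.exp (b v) := (le_div_iff₀ hbv0).mp hub
        nlinarith
      exact tendsto_atTop_mono' atTop key (hbtop.atTop_div_const hM0)
    · intro ε' hε'
      set δ := min ε (ε' / (2 * (1 + ε'))) with hδdef
      have hδ0 : 0 < δ := lt_min hε (by positivity)
      have hδε : δ ≤ ε := min_le_left _ _
      have hδ2 : δ * (2 * (1 + ε')) ≤ ε' := by
        have h := min_le_right ε (ε' / (2 * (1 + ε')))
        rw [le_div_iff₀ (by positivity)] at h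
        exact h
      have hδhalf : δ ≤ 2⁻¹ := by nlinarith
      have h1δ : 0 < 1 - δ := by linarith
      set p := 1 / (1 - δ) with hp
      have hp0 : 0 < p := by positivity
      have hplt : p < 1 + ε' := by
        rw [hp, div_lt_iff₀ h1δ]
        nlinarith
      set c := δ * δ * (1 - δ) with hc
      have hc0 : 0 < c := by positivity
      have key : ∀ᶠ v in atTop, Real.exp (b v) / v ^ (1 + ε')
          ≤ c ^ (-p) * v ^ (p - (1 + ε')) := by
        filter_upwards [hb, hbtop.eventually (eventually_ge_atTop 0),
          eventually_ge_atTop 1] with v hv hbv0 hv1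
        have hv0 : (0:ℝ) < v := lt_of_lt_of_le one_pos hv1
        have hlb := stmt8_lb hg_meas hg_nonneg hM hg_low hδ0 hδε hδhalf hbv0
        rw [hv, ← hc] at hlb
        have h2 : Real.exp ((1 - δ) * b v) ≤ v / c := by
          rw [le_div_iff₀ hc0]
          linarith [mul_comm (Real.exp ((1 - δ) * b v)) c]
        have h3 : Real.exp (b v) ≤ (v / c) ^ p := by
          have h := Real.rpow_le_rpow (Real.exp_pos _).le h2 hp0.le
          rw [← Real.exp_mul] at h
          have heq : (1 - δ) * b v * p = b v := by
            rw [hp]; field_simp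
          rwa [heq] at h
        have h4 : (v / c) ^ p = c ^ (-p) * v ^ p := by
          rw [Real.div_rpow hv0.le hc0.le, Real.rpow_neg hc0.le, div_eq_mul_inv, mul_comm]
        calc Real.exp (b v) / v ^ (1 + ε')
            ≤ (c ^ (-p) * v ^ p) / v ^ (1 + ε') := by
              rw [← h4]
              gcongr
        _ = c ^ (-p) * v ^ (p - (1 + ε')) := by
              rw [Real.rpow_sub hv0]; ring
      have hlim : Tendsto (fun v : ℝ => c ^ (-p) * v ^ (p - (1 + ε'))) atTop (nhds 0) := by
        have h := tendsto_rpow_neg_atTop (y := (1 + ε') - p) (by linarith)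
        have h2 := h.const_mul (c ^ (-p))
        rw [mul_zero] at h2
        convert h2 using 3 with v
        ring_nf
      apply squeeze_zero' ?_ key hlim
      filter_upwards [eventually_gt_atTop 0] with v hv0
      positivity
end

section
/- Let g : [0,1] → [0,∞) be measurable and satisfy g(x) ≥ ε on [1−ε,1] for some ε ∈ (0,1), and suppose ∫₀¹ e^{βx} g(x) dx < ∞ for all β. Define H(τ) = ∫₀¹ e^{βx} (1 − cos(τx)) g(x) dx. Then there exists β₀ such that for all β ≥ β₀ and all real τ with |τ| ≥ π, H(τ) > (ε π²/8) · e^β/β³. -/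
open MeasureTheory

private lemma key_upper (β τ v : ℝ) (hβ : Real.pi ≤ β) (hτ : Real.pi ≤ |τ|)
    (hv : v ^ 2 ≤ β ^ 2 + τ ^ 2) :
    v / (β ^ 2 + τ ^ 2) ≤ 1 / β - Real.pi ^ 2 / (4 * β ^ 3) := by
  have hπ : (3:ℝ) < Real.pi := Real.pi_gt_three
  have hβ0 : 0 < β := by linarith
  have hτ2 : Real.pi ^ 2 ≤ τ ^ 2 := by
    have h := sq_abs τ
    nlinarith [abs_nonneg τ]
  have hβ2 : Real.pi ^ 2 ≤ β ^ 2 := by nlinarith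
  have hu9 : (9:ℝ) < Real.pi ^ 2 := by nlinarith
  have ht : 0 < β ^ 2 + τ ^ 2 := by nlinarith
  have hfac : 16 * β ^ 6 ≤ (β ^ 2 + Real.pi ^ 2) * (4 * β ^ 2 - Real.pi ^ 2) ^ 2 := by
    nlinarith [mul_nonneg (mul_nonneg (by positivity : (0:ℝ) ≤ Real.pi ^ 2) (sq_nonneg β))
      (sub_nonneg.2 hβ2), sq_nonneg (Real.pi ^ 2), sq_nonneg β]
  have h1 : 16 * β ^ 6 ≤ (β ^ 2 + τ ^ 2) * (4 * β ^ 2 - Real.pi ^ 2) ^ 2 := by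
    have := mul_le_mul_of_nonneg_right (by linarith : β ^ 2 + Real.pi ^ 2 ≤ β ^ 2 + τ ^ 2)
      (sq_nonneg (4 * β ^ 2 - Real.pi ^ 2))
    linarith
  have hB : 0 ≤ (β ^ 2 + τ ^ 2) * (4 * β ^ 2 - Real.pi ^ 2) := by nlinarith
  have h2 : (4 * β ^ 3 * v) ^ 2 ≤ ((β ^ 2 + τ ^ 2) * (4 * β ^ 2 - Real.pi ^ 2)) ^ 2 := by
    nlinarith [mul_le_mul_of_nonneg_left hv (by positivity : (0:ℝ) ≤ 16 * β ^ 6),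
      mul_le_mul_of_nonneg_left h1 ht.le]
  have h3 : 4 * β ^ 3 * v ≤ (β ^ 2 + τ ^ 2) * (4 * β ^ 2 - Real.pi ^ 2) := by
    nlinarith [h2, hB]
  rw [div_le_iff₀ ht]
  have heq : (1 / β - Real.pi ^ 2 / (4 * β ^ 3)) * (β ^ 2 + τ ^ 2)
      = (β ^ 2 + τ ^ 2) * (4 * β ^ 2 - Real.pi ^ 2) / (4 * β ^ 3) := by
    field_simp
  rw [heq, le_div_iff₀ (by positivity : (0:ℝ) < 4 * β ^ 3)]
  linarith

private lemma key_lower (β τ v : ℝ) (hβ0 : 0 < β) (hv : v ^ 2 ≤ β ^ 2 + τ ^ 2) :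
    -(1 / β) ≤ v / (β ^ 2 + τ ^ 2) := by
  have ht : 0 < β ^ 2 + τ ^ 2 := by nlinarith [sq_nonneg τ]
  have h : 0 ≤ v * β + (β ^ 2 + τ ^ 2) := by nlinarith [sq_nonneg (v * β + (β ^ 2 + τ ^ 2)), sq_nonneg τ]
  have heq : v / (β ^ 2 + τ ^ 2) + 1 / β = (v * β + (β ^ 2 + τ ^ 2)) / ((β ^ 2 + τ ^ 2) * β) := by
    field_simp
  have hpos : 0 ≤ (v * β + (β ^ 2 + τ ^ 2)) / ((β ^ 2 + τ ^ 2) * β) :=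
    div_nonneg h (by positivity)
  linarith [hpos, heq]

private lemma vsq_le (β τ θ : ℝ) : (β * Real.cos θ + τ * Real.sin θ) ^ 2 ≤ β ^ 2 + τ ^ 2 := by
  nlinarith [Real.sin_sq_add_cos_sq θ, sq_nonneg (β * Real.sin θ - τ * Real.cos θ)]

private lemma core (ε β τ : ℝ) (hε0 : 0 < ε) (hε1 : ε < 1)
    (hβ : Real.pi + 54 / ε ^ 3 ≤ β) (hτ : Real.pi ≤ |τ|) :
    Real.pi ^ 2 / 8 * (Real.exp β / β ^ 3)
      < (Real.exp β / β - Real.exp β * (β * Real.cos τ + τ * Real.sin τ) / (β ^ 2 + τ ^ 2))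
        - (Real.exp (β * (1 - ε)) / β - Real.exp (β * (1 - ε)) *
            (β * Real.cos (τ * (1 - ε)) + τ * Real.sin (τ * (1 - ε))) / (β ^ 2 + τ ^ 2)) := by
  have hπ3 : (3:ℝ) < Real.pi := Real.pi_gt_three
  have hε3 : (0:ℝ) < ε ^ 3 := by positivity
  have h54 : (0:ℝ) < 54 / ε ^ 3 := by positivity
  have hβπ : Real.pi ≤ β := by linarith
  have hβ0 : (0:ℝ) < β := by linarith
  have ht0 : (0:ℝ) < β ^ 2 + τ ^ 2 := by nlinarith [sq_nonneg τ]
  set E : ℝ := Real.exp β with hE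
  set A : ℝ := Real.exp (β * (1 - ε)) with hA'
  have hEpos : 0 < E := Real.exp_pos _
  have hApos : 0 < A := Real.exp_pos _
  have hAE : A * Real.exp (ε * β) = E := by
    rw [hA', hE, ← Real.exp_add]; congr 1; ring
  have hexpb : 2 * β ^ 2 < Real.exp (ε * β) := by
    have h3 : Real.exp (ε * β) = Real.exp (ε * β / 3) ^ 3 := by
      rw [← Real.exp_nat_mul]; norm_num; ring
    have h4 : ε * β / 3 + 1 ≤ Real.exp (ε * β / 3) := by
      have := Real.add_one_le_exp (ε * β / 3); linarith
    have h5 : (ε * β / 3) ^ 3 ≤ Real.exp (ε * β / 3) ^ 3 :=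
      pow_le_pow_left₀ (by positivity) (by linarith) 3
    have h6 : 54 / ε ^ 3 < β := by linarith [Real.pi_pos]
    have h7 : 54 < ε ^ 3 * β := by rw [div_lt_iff₀ hε3] at h6; linarith
    have h8 : 0 < β ^ 2 * (ε ^ 3 * β - 54) := mul_pos (by positivity) (by linarith)
    have h10 : 2 * β ^ 2 < (ε * β / 3) ^ 3 := by nlinarith [h8]
    calc 2 * β ^ 2 < (ε * β / 3) ^ 3 := h10
      _ ≤ Real.exp (ε * β / 3) ^ 3 := h5
      _ = Real.exp (ε * β) := h3.symm
  have hub := key_upper β τ _ hβπ hτ (vsq_le β τ τ)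
  have hlb := key_lower β τ _ hβ0 (vsq_le β τ (τ * (1 - ε)))
  have h9a : 2 * (A * β ^ 2) < A * Real.exp (ε * β) := by nlinarith [hexpb, hApos]
  have h9 : 16 * (A * β ^ 2) < Real.pi ^ 2 * E := by
    have hp2 : (9:ℝ) < Real.pi ^ 2 := by nlinarith
    have hAb : (0:ℝ) < A * β ^ 2 := mul_pos hApos (by positivity)
    have step1 : 18 * (A * β ^ 2) < Real.pi ^ 2 * (2 * (A * β ^ 2)) := by nlinarith [hp2, hAb]
    have step2 : Real.pi ^ 2 * (2 * (A * β ^ 2)) < Real.pi ^ 2 * (A * Real.exp (ε * β)) := by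
      have := mul_lt_mul_of_pos_left h9a (show (0:ℝ) < Real.pi ^ 2 by positivity)
      linarith [this]
    rw [hAE] at step2
    linarith [hAb]
  have hfin : 2 * (A / β) < Real.pi ^ 2 / 8 * (E / β ^ 3) := by
    have heq : Real.pi ^ 2 / 8 * (E / β ^ 3) - 2 * (A / β)
        = (Real.pi ^ 2 * E - 16 * (A * β ^ 2)) / (8 * β ^ 3) := by
      field_simp; ring
    have hpos : 0 < (Real.pi ^ 2 * E - 16 * (A * β ^ 2)) / (8 * β ^ 3) :=
      div_pos (by linarith) (by positivity)
    linarith [hpos, heq]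
  rw [mul_div_assoc, mul_div_assoc]
  have e1 : E * (1 / β - Real.pi ^ 2 / (4 * β ^ 3))
      = E / β - 2 * (Real.pi ^ 2 / 8 * (E / β ^ 3)) := by ring
  have e2 : A * -(1 / β) = -(A / β) := by ring
  have hub' := mul_le_mul_of_nonneg_left hub hEpos.le
  have hlb' := mul_le_mul_of_nonneg_left hlb hApos.le
  rw [e1] at hub'
  rw [e2] at hlb'
  linarith [hub', hlb', hfin]

/-- **Lemma (lower bound for `H(τ)` on `|τ| ≥ π`).**
Let `g : [0,1] → [0,∞)` be measurable with `g ≥ ε` on `[1−ε,1]` for some `ε ∈ (0,1)`,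
and with `∫₀¹ e^{βx} g(x) dx < ∞` for all `β`. Let
`H(τ) = ∫₀¹ e^{βx} (1 − cos(τx)) g(x) dx`. Then there is `β₀` such that for all
`β ≥ β₀` and all `τ` with `|τ| ≥ π`, `H(τ) > (ε π²/8) e^β/β³`. -/
theorem stmt13
    (g : ℝ → ℝ) (hg_meas : Measurable g)
    (hg_nonneg : ∀ x ∈ Set.Icc (0:ℝ) 1, 0 ≤ g x)
    (ε : ℝ) (hε : ε ∈ Set.Ioo (0:ℝ) 1)
    (hg_low : ∀ x ∈ Set.Icc (1 - ε) 1, ε ≤ g x)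
    (hint : ∀ β : ℝ, IntervalIntegrable (fun x => Real.exp (β * x) * g x) volume 0 1) :
    ∃ β₀ : ℝ, ∀ β : ℝ, β₀ ≤ β → ∀ τ : ℝ, Real.pi ≤ |τ| →
      (ε * Real.pi ^ 2 / 8) * (Real.exp β / β ^ 3)
        < ∫ x in (0:ℝ)..1, Real.exp (β * x) * (1 - Real.cos (τ * x)) * g x := by
  obtain ⟨hε0, hε1⟩ := hε
  have hπ3 : (3:ℝ) < Real.pi := Real.pi_gt_three
  refine ⟨Real.pi + 54 / ε ^ 3, fun β hβ τ hτ => ?_⟩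
  have hε3 : (0:ℝ) < ε ^ 3 := by positivity
  have h54 : (0:ℝ) < 54 / ε ^ 3 := by positivity
  have hβπ : Real.pi ≤ β := by linarith
  have hβ0 : (0:ℝ) < β := by linarith
  have ht0 : (0:ℝ) < β ^ 2 + τ ^ 2 := by nlinarith [sq_nonneg τ]
  set a : ℝ := 1 - ε with ha
  have ha0 : (0:ℝ) ≤ a := by rw [ha]; linarith
  have ha1 : a ≤ 1 := by rw [ha]; linarith
  set F : ℝ → ℝ := fun x => Real.exp (β * x) * (1 - Real.cos (τ * x)) with hF
  have hFc : Continuous F := by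
    rw [hF]; fun_prop
  have hFnn : ∀ x, 0 ≤ F x := fun x =>
    mul_nonneg (Real.exp_pos _).le (by nlinarith [Real.cos_le_one (τ * x)])
  -- integrability of the full integrand
  have hf_int : IntervalIntegrable (fun x => F x * g x) volume 0 1 := by
    have hdom : IntervalIntegrable (fun x => 2 * (Real.exp (β * x) * g x)) volume 0 1 :=
      (hint β).const_mul 2
    refine hdom.mono_fun ((hFc.measurable.mul hg_meas).aestronglyMeasurable) ?_
    rw [Set.uIoc_of_le (by norm_num : (0:ℝ) ≤ 1)]
    refine (ae_restrict_iff' measurableSet_Ioc).2 (ae_of_all _ fun x hx => ?_)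
    have hgx : 0 ≤ g x := hg_nonneg x ⟨hx.1.le, hx.2⟩
    have h2 : F x ≤ 2 * Real.exp (β * x) := by
      show Real.exp (β * x) * (1 - Real.cos (τ * x)) ≤ _
      nlinarith [Real.neg_one_le_cos (τ * x), (Real.exp_pos (β * x)).le]
    show ‖F x * g x‖ ≤ ‖2 * (Real.exp (β * x) * g x)‖
    rw [Real.norm_eq_abs, Real.norm_eq_abs, abs_of_nonneg (mul_nonneg (hFnn x) hgx),
      abs_of_nonneg (by positivity)]
    nlinarith [hFnn x]
  have hmem_a : a ∈ Set.uIcc (0:ℝ) 1 := by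
    rw [Set.uIcc_of_le (by norm_num : (0:ℝ) ≤ 1)]; exact ⟨ha0, ha1⟩
  have hint0a : IntervalIntegrable (fun x => F x * g x) volume 0 a :=
    hf_int.mono_set (Set.uIcc_subset_uIcc Set.left_mem_uIcc hmem_a)
  have hinta1 : IntervalIntegrable (fun x => F x * g x) volume a 1 :=
    hf_int.mono_set (Set.uIcc_subset_uIcc hmem_a Set.right_mem_uIcc)
  have hsplit : (∫ x in (0:ℝ)..1, F x * g x)
      = (∫ x in (0:ℝ)..a, F x * g x) + ∫ x in a..1, F x * g x :=
    (intervalIntegral.integral_add_adjacent_intervals hint0a hinta1).symm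
  have h0a : 0 ≤ ∫ x in (0:ℝ)..a, F x * g x :=
    intervalIntegral.integral_nonneg ha0 fun x hx =>
      mul_nonneg (hFnn x) (hg_nonneg x ⟨hx.1, hx.2.trans ha1⟩)
  have h_mono : (∫ x in a..1, ε * F x) ≤ ∫ x in a..1, F x * g x := by
    refine intervalIntegral.integral_mono_on ha1
      ((continuous_const.mul hFc).intervalIntegrable a 1) hinta1 fun x hx => ?_
    have hgx : ε ≤ g x := hg_low x hx
    calc ε * F x ≤ g x * F x := mul_le_mul_of_nonneg_right hgx (hFnn x)
      _ = F x * g x := mul_comm _ _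
  -- FTC computation
  have hderiv : ∀ x ∈ Set.uIcc a (1:ℝ),
      HasDerivAt (fun y => Real.exp (β * y) / β -
        Real.exp (β * y) * (β * Real.cos (τ * y) + τ * Real.sin (τ * y)) / (β ^ 2 + τ ^ 2))
        (F x) x := by
    intro x _
    have he : HasDerivAt (fun y : ℝ => Real.exp (β * y)) (Real.exp (β * x) * β) x := by
      simpa using ((hasDerivAt_id x).const_mul β).exp
    have hc : HasDerivAt (fun y : ℝ => β * Real.cos (τ * y) + τ * Real.sin (τ * y))
        (β * (-Real.sin (τ * x) * τ) + τ * (Real.cos (τ * x) * τ)) x := by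
      have h1 := (((hasDerivAt_id x).const_mul τ).cos).const_mul β
      have h2 := (((hasDerivAt_id x).const_mul τ).sin).const_mul τ
      simpa [mul_comm, mul_assoc] using h1.fun_add h2
    have h := (he.div_const β).fun_sub ((he.fun_mul hc).div_const (β ^ 2 + τ ^ 2))
    convert h using 1
    case e'_4 => rfl
    case e'_5 => rfl
    rw [hF]
    have hne : β ^ 2 + τ ^ 2 ≠ 0 := ne_of_gt ht0
    field_simp
    ring
  have hFTC : (∫ x in a..1, F x)
      = (Real.exp β / β - Real.exp β * (β * Real.cos τ + τ * Real.sin τ) / (β ^ 2 + τ ^ 2))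
        - (Real.exp (β * a) / β -
          Real.exp (β * a) * (β * Real.cos (τ * a) + τ * Real.sin (τ * a)) / (β ^ 2 + τ ^ 2)) := by
    have h := intervalIntegral.integral_eq_sub_of_hasDerivAt hderiv (hFc.intervalIntegrable a 1)
    simpa using h
  have hcore := core ε β τ hε0 hε1 hβ hτ
  rw [← ha] at hcore
  have hI : Real.pi ^ 2 / 8 * (Real.exp β / β ^ 3) < ∫ x in a..1, F x := by
    rw [hFTC]; exact hcore
  calc (ε * Real.pi ^ 2 / 8) * (Real.exp β / β ^ 3)
      = ε * (Real.pi ^ 2 / 8 * (Real.exp β / β ^ 3)) := by ring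
    _ < ε * ∫ x in a..1, F x := mul_lt_mul_of_pos_left hI hε0
    _ = ∫ x in a..1, ε * F x := (intervalIntegral.integral_const_mul ε F).symm
    _ ≤ ∫ x in a..1, F x * g x := h_mono
    _ ≤ ∫ x in (0:ℝ)..1, F x * g x := by rw [hsplit]; linarith
end
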